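/- Let P1 and P2 be disjoint copies of the Petersen graph. In P1 let u and v be adjacent vertices, with a1, a2 the neighbours of u other than v and b1, b2 the neighbours of v other than u. In P2 let e = x1y1 and f = x2y2 be two independent edges. Form the graph Z1 as follows: take the disjoint union of P1 − {u,v} and P2 with the edges e and f deleted; add the edges b1x1 and b2y1; and add four new pendant vertices a1*, a2*, x2*, y2* with edges a1a1*, a2a2*, x2x2*, y2y2*. Then Z1 admits no proper 3-edge-colouring. (That is, the junction Z1 = I∘H of the isochromatic 4-pole I with the heterochromatic 4-pole H is uncolourable, so ρ(Z1) ≥ 1.) -/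

import Mathlib

/-- A proper 3-edge-colouring of a simple graph: a colour for every unordered pair,
such that distinct edges of the graph sharing a vertex receive distinct colours. -/
def IsProper3EdgeColoring {V : Type*} (G : SimpleGraph V) (c : Sym2 V → Fin 3) : Prop :=
  ∀ e₁ e₂ : Sym2 V, e₁ ∈ G.edgeSet → e₂ ∈ G.edgeSet → e₁ ≠ e₂ →
    (∃ v, v ∈ e₁ ∧ v ∈ e₂) → c e₁ ≠ c e₂

/-- A graph admits a proper 3-edge-colouring. -/
def ThreeEdgeColorable {V : Type*} (G : SimpleGraph V) : Prop :=
  ∃ c : Sym2 V → Fin 3, IsProper3EdgeColoring G c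

/-- The vertices of the Petersen graph: the 2-element subsets of a 5-element set. -/
abbrev PetersenVert : Type := {s : Finset (Fin 5) // s.card = 2}

/-- The Petersen graph, as the Kneser graph of 2-element subsets of a 5-element set:
two subsets are adjacent when they are disjoint. -/
def petersen : SimpleGraph PetersenVert where
  Adj a b := Disjoint (a : Finset (Fin 5)) (b : Finset (Fin 5))
  symm := ⟨fun _ _ h => h.symm⟩
  loopless := by
    refine ⟨?_⟩
    intro a h
    have := disjoint_self.mp h
    have h2 := a.2
    rw [this] at h2
    simp at h2

/-- The (2,2)-pole `Z1 = I ∘ H`: take a copy of the Petersen graph with the adjacent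
vertices `u, v` removed, and a second copy with the independent edges `x1y1`, `x2y2`
deleted; add edges `b1x1` and `b2y1`, and pendant vertices (indexed by `Fin 4`)
at `a1, a2, x2, y2`. -/
def poleZ1 (u v a1 a2 b1 b2 x1 y1 x2 y2 : PetersenVert) :
    SimpleGraph (({x : PetersenVert // x ≠ u ∧ x ≠ v} ⊕ PetersenVert) ⊕ Fin 4) :=
  SimpleGraph.fromRel (fun p q =>
    match p, q with
    | Sum.inl (Sum.inl x), Sum.inl (Sum.inl y) => petersen.Adj x.1 y.1
    | Sum.inl (Sum.inr x), Sum.inl (Sum.inr y) =>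
        petersen.Adj x y ∧ s(x, y) ≠ s(x1, y1) ∧ s(x, y) ≠ s(x2, y2)
    | Sum.inl (Sum.inl x), Sum.inl (Sum.inr y) =>
        (x.1 = b1 ∧ y = x1) ∨ (x.1 = b2 ∧ y = y1)
    | Sum.inl (Sum.inl x), Sum.inr k => (k = 0 ∧ x.1 = a1) ∨ (k = 1 ∧ x.1 = a2)
    | Sum.inl (Sum.inr y), Sum.inr k => (k = 2 ∧ y = x2) ∨ (k = 3 ∧ y = y2)
    | _, _ => False)

namespace PZ1

abbrev Pr := Nat × Nat

def vL : List PetersenVert :=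
  [⟨{0,1}, by decide⟩, ⟨{0,2}, by decide⟩, ⟨{0,3}, by decide⟩, ⟨{0,4}, by decide⟩,
   ⟨{1,2}, by decide⟩, ⟨{1,3}, by decide⟩, ⟨{1,4}, by decide⟩, ⟨{2,3}, by decide⟩,
   ⟨{2,4}, by decide⟩, ⟨{3,4}, by decide⟩]

def decode (n : Nat) : PetersenVert := vL.getD n ⟨{0,1}, by decide⟩

def s2 (pr : Pr) : Sym2 PetersenVert := s(decode pr.1, decode pr.2)

def E : List Pr := [(0,7),(0,8),(0,9),(1,5),(1,6),(1,9),(2,4),(2,6),(2,8),(3,4),(3,5),(3,7),(4,9),(5,8),(6,7)]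

def shares (pr qr : Pr) : Bool := pr.1 == qr.1 || pr.1 == qr.2 || pr.2 == qr.1 || pr.2 == qr.2

def colors : List (Fin 3) := [0, 1, 2]

def search : List Pr → List (List (Pr × Fin 3))
  | [] => [[]]
  | pr :: rest =>
      (search rest).flatMap fun τ =>
        (colors.filter fun col => τ.all fun q => !shares pr q.1 || col != q.2).map
          fun col => (pr, col) :: τ

def internal (pr₀ : Pr) : List Pr :=
  E.filter fun pr => pr.1 != pr₀.1 && pr.1 != pr₀.2 && pr.2 != pr₀.1 && pr.2 != pr₀.2

def delE (pr₀ : Pr) : List Pr := E.filter fun pr => pr != pr₀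

def nbrsE (z bar : Nat) : List Nat :=
  (E.filterMap fun pr => if pr.1 == z then some pr.2 else if pr.2 == z then some pr.1 else none).filter
    fun w => w != bar

def colorsAt (τ : List (Pr × Fin 3)) (w : Nat) : List (Fin 3) :=
  τ.filterMap fun q => if q.1.1 == w || q.1.2 == w then some q.2 else none

-- decide facts
instance decAdj : DecidableRel petersen.Adj := fun a b =>
  decidable_of_iff (Disjoint (a : Finset (Fin 5)) (b : Finset (Fin 5))) Iff.rfl

theorem D2 : ∀ pr ∈ E, petersen.Adj (decode pr.1) (decode pr.2) := by decide

theorem D7 : ∀ pr₀ ∈ E, search (delE pr₀) = [] := by decide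

def sideOK (pr₀ : Pr) (z bar : Nat) : Prop :=
  ∀ τ ∈ search (internal pr₀), ∀ w1 ∈ nbrsE z bar, ∀ w2 ∈ nbrsE z bar,
    ∀ α β : Fin 3, α ∉ colorsAt τ w1 → β ∉ colorsAt τ w2 → α = β

instance (pr₀ : Pr) (z bar : Nat) : Decidable (sideOK pr₀ z bar) := by
  unfold sideOK; infer_instance

theorem D8 : ∀ pr₀ ∈ E, sideOK pr₀ pr₀.1 pr₀.2 ∧ sideOK pr₀ pr₀.2 pr₀.1 := by decide

theorem D1 : ∀ p q : PetersenVert, petersen.Adj p q → ∃ pr ∈ E, s2 pr = s(p, q) := by decide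

theorem D3 : ∀ pr₀ ∈ E, ∀ pr ∈ E, pr ≠ pr₀ → s2 pr ≠ s2 pr₀ := by decide

theorem D4 : E.Pairwise fun pr qr => s2 pr ≠ s2 qr := by decide

theorem D5 : ∀ pr₀ ∈ E, ∀ pr ∈ internal pr₀,
    decode pr.1 ≠ decode pr₀.1 ∧ decode pr.1 ≠ decode pr₀.2 ∧
    decode pr.2 ≠ decode pr₀.1 ∧ decode pr.2 ≠ decode pr₀.2 := by decide

def nbrOK (pr₀ : Pr) (z bar : Nat) : Prop :=
  ∀ b : PetersenVert, petersen.Adj (decode z) b → b ≠ decode bar →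
    ∃ w ∈ nbrsE z bar, decode w = b

instance (pr₀ : Pr) (z bar : Nat) : Decidable (nbrOK pr₀ z bar) := by
  unfold nbrOK; infer_instance

theorem D6 : ∀ pr₀ ∈ E, nbrOK pr₀ pr₀.1 pr₀.2 ∧ nbrOK pr₀ pr₀.2 pr₀.1 := by decide

theorem mem_colors : ∀ x : Fin 3, x ∈ colors := by decide

theorem shares_symm {pr qr : Pr} (h : shares pr qr = true) : shares qr pr = true := by
  simp only [shares, Bool.or_eq_true, beq_iff_eq] at h ⊢
  tauto

theorem assn_mem_search (c' : Sym2 PetersenVert → Fin 3) :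
    ∀ L : List Pr,
      L.Pairwise (fun pr qr => shares pr qr = true → c' (s2 pr) ≠ c' (s2 qr)) →
      (L.map fun pr => (pr, c' (s2 pr))) ∈ search L := by
  intro L
  induction L with
  | nil => intro _; simp [search]
  | cons pr rest ih =>
      intro hp
      rw [List.pairwise_cons] at hp
      simp only [search, List.map_cons, List.mem_flatMap]
      refine ⟨_, ih hp.2, ?_⟩
      rw [List.mem_map]
      refine ⟨c' (s2 pr), ?_, rfl⟩
      rw [List.mem_filter]
      refine ⟨mem_colors _, ?_⟩
      rw [List.all_eq_true]
      intro q hq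
      rw [List.mem_map] at hq
      obtain ⟨qr', hqr', rfl⟩ := hq
      by_cases hs : shares pr qr' = true
      · have hne := hp.1 qr' hqr' hs
        simp [bne_iff_ne, hne]
      · rw [Bool.not_eq_true] at hs
        simp [hs]

theorem not_mem_colorsAt {τ : List (Pr × Fin 3)} {w : Nat} {α : Fin 3}
    (h : ∀ q ∈ τ, (q.1.1 = w ∨ q.1.2 = w) → q.2 ≠ α) : α ∉ colorsAt τ w := by
  intro hmem
  rw [colorsAt, List.mem_filterMap] at hmem
  obtain ⟨q, hq, he⟩ := hmem
  by_cases hw : (q.1.1 == w || q.1.2 == w) = true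
  · rw [if_pos hw] at he
    rw [Bool.or_eq_true, beq_iff_eq, beq_iff_eq] at hw
    exact h q hq hw (Option.some.inj he)
  · rw [if_neg hw] at he
    cases he

section Glue

variable (u v a1 a2 b1 b2 x1 y1 x2 y2 : PetersenVert)

local notation "Z" => poleZ1 u v a1 a2 b1 b2 x1 y1 x2 y2
local notation "VZ" => (({x : PetersenVert // x ≠ u ∧ x ≠ v} ⊕ PetersenVert) ⊕ Fin 4)

theorem adjH {p q : PetersenVert} (h : petersen.Adj p q) (hn1 : s(p, q) ≠ s(x1, y1))
    (hn2 : s(p, q) ≠ s(x2, y2)) :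
    (Z).Adj (.inl (.inr p)) (.inl (.inr q)) := by
  rw [poleZ1, SimpleGraph.fromRel_adj]
  exact ⟨by simp [h.ne], Or.inl ⟨h, hn1, hn2⟩⟩

theorem adjI {p q : PetersenVert} (h : petersen.Adj p q) (hp : p ≠ u ∧ p ≠ v)
    (hq : q ≠ u ∧ q ≠ v) :
    (Z).Adj (.inl (.inl ⟨p, hp⟩)) (.inl (.inl ⟨q, hq⟩)) := by
  rw [poleZ1, SimpleGraph.fromRel_adj]
  exact ⟨by simp [h.ne], Or.inl h⟩

theorem adjCon1 (hBu : b1 ≠ u) (hBv : b1 ≠ v) :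
    (Z).Adj (.inl (.inl ⟨b1, hBu, hBv⟩)) (.inl (.inr x1)) := by
  rw [poleZ1, SimpleGraph.fromRel_adj]
  exact ⟨by simp, Or.inl (Or.inl ⟨rfl, rfl⟩)⟩

theorem adjCon2 (hBu : b2 ≠ u) (hBv : b2 ≠ v) :
    (Z).Adj (.inl (.inl ⟨b2, hBu, hBv⟩)) (.inl (.inr y1)) := by
  rw [poleZ1, SimpleGraph.fromRel_adj]
  exact ⟨by simp, Or.inl (Or.inr ⟨rfl, rfl⟩)⟩

/-- H-side contradiction: the two connector edges cannot get equal colours. -/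
theorem caseH (c : Sym2 VZ → Fin 3) (hc : IsProper3EdgeColoring (Z) c)
    (hf : petersen.Adj x2 y2)
    (hb1u : b1 ≠ u) (hb1v : b1 ≠ v) (hb2u : b2 ≠ u) (hb2v : b2 ≠ v)
    (hab : c s(.inl (.inl ⟨b1, hb1u, hb1v⟩), .inl (.inr x1)) =
           c s(.inl (.inl ⟨b2, hb2u, hb2v⟩), .inl (.inr y1))) : False := by
  obtain ⟨pr₀, hpr₀E, hpr₀s⟩ := D1 x2 y2 hf
  set α := c s(.inl (.inl ⟨b1, hb1u, hb1v⟩), .inl (.inr x1)) with hα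
  set embH : PetersenVert → VZ := fun w => .inl (.inr w) with hembH
  set d : Sym2 PetersenVert → Fin 3 := fun e => if e = s(x1, y1) then α else c (e.map embH)
    with hd
  have hembinj : Function.Injective embH := fun a b h => by
    simpa [hembH] using h
  have hdel : ∀ pr ∈ delE pr₀, pr ∈ E ∧ s2 pr ≠ s(x2, y2) := by
    intro pr hpr
    rw [delE, List.mem_filter] at hpr
    have hne : pr ≠ pr₀ := by simpa using hpr.2
    exact ⟨hpr.1, hpr₀s ▸ D3 pr₀ hpr₀E pr hpr.1 hne⟩
  -- edges touching x1 or y1 cannot get the colour α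
  have hcon : ∀ P Q : PetersenVert, petersen.Adj P Q → s(P, Q) ≠ s(x1, y1) →
      s(P, Q) ≠ s(x2, y2) → (P = x1 ∨ P = y1 ∨ Q = x1 ∨ Q = y1) →
      c s(embH P, embH Q) ≠ α := by
    intro P Q hPQ hne1 hne2 hmem
    have hZ : (Z).Adj (embH P) (embH Q) := adjH u v a1 a2 b1 b2 x1 y1 x2 y2 hPQ hne1 hne2
    rcases hmem with h | h | h | h
    · rw [h] at hZ ⊢
      exact hc _ _ ((SimpleGraph.mem_edgeSet _).mpr hZ)
        ((SimpleGraph.mem_edgeSet _).mpr (adjCon1 u v a1 a2 b1 b2 x1 y1 x2 y2 hb1u hb1v))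
        (by simp [hembH, Sym2.eq_iff]) ⟨embH x1, Sym2.mem_iff.mpr (Or.inl rfl),
          Sym2.mem_iff.mpr (Or.inr (by rw [hembH]))⟩
    · rw [h] at hZ ⊢
      rw [hab]
      exact hc _ _ ((SimpleGraph.mem_edgeSet _).mpr hZ)
        ((SimpleGraph.mem_edgeSet _).mpr (adjCon2 u v a1 a2 b1 b2 x1 y1 x2 y2 hb2u hb2v))
        (by simp [hembH, Sym2.eq_iff]) ⟨embH y1, Sym2.mem_iff.mpr (Or.inl rfl),
          Sym2.mem_iff.mpr (Or.inr (by rw [hembH]))⟩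
    · rw [h] at hZ ⊢
      exact hc _ _ ((SimpleGraph.mem_edgeSet _).mpr hZ)
        ((SimpleGraph.mem_edgeSet _).mpr (adjCon1 u v a1 a2 b1 b2 x1 y1 x2 y2 hb1u hb1v))
        (by simp [hembH, Sym2.eq_iff]) ⟨embH x1, Sym2.mem_iff.mpr (Or.inr rfl),
          Sym2.mem_iff.mpr (Or.inr (by rw [hembH]))⟩
    · rw [h] at hZ ⊢
      rw [hab]
      exact hc _ _ ((SimpleGraph.mem_edgeSet _).mpr hZ)
        ((SimpleGraph.mem_edgeSet _).mpr (adjCon2 u v a1 a2 b1 b2 x1 y1 x2 y2 hb2u hb2v))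
        (by simp [hembH, Sym2.eq_iff]) ⟨embH y1, Sym2.mem_iff.mpr (Or.inr rfl),
          Sym2.mem_iff.mpr (Or.inr (by rw [hembH]))⟩
  -- asymmetric key case: first edge is the x1y1-edge
  have key : ∀ pr ∈ delE pr₀, ∀ qr ∈ delE pr₀, shares pr qr = true → s2 pr ≠ s2 qr →
      s2 pr = s(x1, y1) → d (s2 pr) ≠ d (s2 qr) := by
    intro pr hpr qr hqr hsh hne hx
    obtain ⟨hqrE, hqrf⟩ := hdel qr hqr
    have hy : s2 qr ≠ s(x1, y1) := fun h => hne (hx.trans h.symm)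
    have hadj2 := D2 qr hqrE
    rw [hd]
    simp only [if_pos hx, if_neg hy]
    rw [s2, Sym2.map_pair_eq]
    simp only [shares, Bool.or_eq_true, beq_iff_eq] at hsh
    have hmem : decode qr.1 = x1 ∨ decode qr.1 = y1 ∨ decode qr.2 = x1 ∨
        decode qr.2 = y1 := by
      rcases Sym2.eq_iff.mp hx with ⟨e1, e2⟩ | ⟨e1, e2⟩
      · rcases hsh with ((h | h) | h) | h
        · exact Or.inl (by rw [← h]; exact e1)
        · exact Or.inr (Or.inr (Or.inl (by rw [← h]; exact e1)))
        · exact Or.inr (Or.inl (by rw [← h]; exact e2))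
        · exact Or.inr (Or.inr (Or.inr (by rw [← h]; exact e2)))
      · rcases hsh with ((h | h) | h) | h
        · exact Or.inr (Or.inl (by rw [← h]; exact e1))
        · exact Or.inr (Or.inr (Or.inr (by rw [← h]; exact e1)))
        · exact Or.inl (by rw [← h]; exact e2)
        · exact Or.inr (Or.inr (Or.inl (by rw [← h]; exact e2)))
    exact (hcon (decode qr.1) (decode qr.2) hadj2 hy hqrf hmem).symm
  -- pairwise properness for the search instance
  have hP : (delE pr₀).Pairwise (fun pr qr => shares pr qr = true →
      d (s2 pr) ≠ d (s2 qr)) := by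
    refine (D4.filter _).imp_of_mem ?_
    intro pr qr hpr hqr hne hsh
    by_cases hx : s2 pr = s(x1, y1)
    · exact key pr hpr qr hqr hsh hne hx
    · by_cases hy : s2 qr = s(x1, y1)
      · exact (key qr hqr pr hpr (shares_symm hsh) hne.symm hy).symm
      · obtain ⟨hprE, hprf⟩ := hdel pr hpr
        obtain ⟨hqrE, hqrf⟩ := hdel qr hqr
        rw [hd]
        simp only [if_neg hx, if_neg hy]
        rw [s2, s2, Sym2.map_pair_eq, Sym2.map_pair_eq]
        have hZ1 : (Z).Adj (embH (decode pr.1)) (embH (decode pr.2)) :=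
          adjH u v a1 a2 b1 b2 x1 y1 x2 y2 (D2 pr hprE) hx hprf
        have hZ2 : (Z).Adj (embH (decode qr.1)) (embH (decode qr.2)) :=
          adjH u v a1 a2 b1 b2 x1 y1 x2 y2 (D2 qr hqrE) hy hqrf
        have hnemap : s(embH (decode pr.1), embH (decode pr.2)) ≠
            s(embH (decode qr.1), embH (decode qr.2)) := by
          intro h
          apply hne
          rw [s2, s2]
          have := Sym2.map.injective hembinj (a₁ := s(decode pr.1, decode pr.2))
            (a₂ := s(decode qr.1, decode qr.2))
          rw [Sym2.map_pair_eq, Sym2.map_pair_eq] at this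
          exact this h
        simp only [shares, Bool.or_eq_true, beq_iff_eq] at hsh
        refine hc _ _ ((SimpleGraph.mem_edgeSet _).mpr hZ1) ((SimpleGraph.mem_edgeSet _).mpr hZ2)
          hnemap ?_
        rcases hsh with ((h | h) | h) | h
        · exact ⟨embH (decode pr.1), Sym2.mem_iff.mpr (Or.inl rfl),
            Sym2.mem_iff.mpr (Or.inl (by rw [h]))⟩
        · exact ⟨embH (decode pr.1), Sym2.mem_iff.mpr (Or.inl rfl),
            Sym2.mem_iff.mpr (Or.inr (by rw [h]))⟩
        · exact ⟨embH (decode pr.2), Sym2.mem_iff.mpr (Or.inr rfl),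
            Sym2.mem_iff.mpr (Or.inl (by rw [h]))⟩
        · exact ⟨embH (decode pr.2), Sym2.mem_iff.mpr (Or.inr rfl),
            Sym2.mem_iff.mpr (Or.inr (by rw [h]))⟩
  have hmem := assn_mem_search d (delE pr₀) hP
  rw [D7 pr₀ hpr₀E] at hmem
  exact absurd hmem List.not_mem_nil


/-- I-side contradiction: the two connector edges cannot get distinct colours. -/
theorem caseI (c : Sym2 VZ → Fin 3) (hc : IsProper3EdgeColoring (Z) c)
    (huv : petersen.Adj u v)
    (hb1 : petersen.Adj v b1) (hb2 : petersen.Adj v b2)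
    (hb1u : b1 ≠ u) (hb2u : b2 ≠ u) (hb1v : b1 ≠ v) (hb2v : b2 ≠ v)
    (hab : c s(.inl (.inl ⟨b1, hb1u, hb1v⟩), .inl (.inr x1)) ≠
           c s(.inl (.inl ⟨b2, hb2u, hb2v⟩), .inl (.inr y1))) : False := by
  obtain ⟨pr₀, hpr₀E, hpr₀s⟩ := D1 u v huv
  have horient := Sym2.eq_iff.mp hpr₀s
  set α := c s(.inl (.inl ⟨b1, hb1u, hb1v⟩), .inl (.inr x1)) with hαdef
  set β := c s(.inl (.inl ⟨b2, hb2u, hb2v⟩), .inl (.inr y1)) with hβdef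
  set emb : PetersenVert → VZ := fun w =>
    if h : w = u ∨ w = v then .inl (.inr w) else .inl (.inl ⟨w, not_or.mp h⟩) with hemb
  have hembn : ∀ (w : PetersenVert) (h1 : w ≠ u) (h2 : w ≠ v),
      emb w = .inl (.inl ⟨w, h1, h2⟩) := by
    intro w h1 h2
    rw [hemb]
    exact dif_neg (not_or.mpr ⟨h1, h2⟩)
  have hembinj : Function.Injective emb := by
    intro a b h
    rw [hemb] at h
    dsimp only at h
    by_cases ha : a = u ∨ a = v <;> by_cases hb : b = u ∨ b = v
    · rw [dif_pos ha, dif_pos hb] at h; simpa using h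
    · rw [dif_pos ha, dif_neg hb] at h; simp at h
    · rw [dif_neg ha, dif_pos hb] at h; simp at h
    · rw [dif_neg ha, dif_neg hb] at h; simpa using h
  set cI : Sym2 PetersenVert → Fin 3 := fun e => c (e.map emb) with hcI
  have hint : ∀ pr ∈ internal pr₀, pr ∈ E ∧ decode pr.1 ≠ u ∧ decode pr.1 ≠ v ∧
      decode pr.2 ≠ u ∧ decode pr.2 ≠ v := by
    intro pr hpr
    have hprE : pr ∈ E := (List.mem_filter.mp (by rwa [internal] at hpr)).1
    have h5 := D5 pr₀ hpr₀E pr hpr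
    rcases horient with ⟨h1, h2⟩ | ⟨h1, h2⟩
    · exact ⟨hprE, h1 ▸ h5.1, h2 ▸ h5.2.1, h1 ▸ h5.2.2.1, h2 ▸ h5.2.2.2⟩
    · exact ⟨hprE, h2 ▸ h5.2.1, h1 ▸ h5.1, h2 ▸ h5.2.2.2, h1 ▸ h5.2.2.1⟩
  have hP : (internal pr₀).Pairwise (fun pr qr => shares pr qr = true →
      cI (s2 pr) ≠ cI (s2 qr)) := by
    refine (D4.filter _).imp_of_mem ?_
    intro pr qr hpr hqr hne hsh
    obtain ⟨hprE, hp1u, hp1v, hp2u, hp2v⟩ := hint pr hpr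
    obtain ⟨hqrE, hq1u, hq1v, hq2u, hq2v⟩ := hint qr hqr
    show c ((s2 pr).map emb) ≠ c ((s2 qr).map emb)
    rw [s2, s2, Sym2.map_pair_eq, Sym2.map_pair_eq]
    have hZ1 : (Z).Adj (emb (decode pr.1)) (emb (decode pr.2)) := by
      rw [hembn _ hp1u hp1v, hembn _ hp2u hp2v]
      exact adjI u v a1 a2 b1 b2 x1 y1 x2 y2 (D2 pr hprE) ⟨hp1u, hp1v⟩ ⟨hp2u, hp2v⟩
    have hZ2 : (Z).Adj (emb (decode qr.1)) (emb (decode qr.2)) := by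
      rw [hembn _ hq1u hq1v, hembn _ hq2u hq2v]
      exact adjI u v a1 a2 b1 b2 x1 y1 x2 y2 (D2 qr hqrE) ⟨hq1u, hq1v⟩ ⟨hq2u, hq2v⟩
    have hnemap : s(emb (decode pr.1), emb (decode pr.2)) ≠
        s(emb (decode qr.1), emb (decode qr.2)) := by
      intro h
      apply hne
      rw [s2, s2]
      have h2 := Sym2.map.injective hembinj (a₁ := s(decode pr.1, decode pr.2))
        (a₂ := s(decode qr.1, decode qr.2))
      rw [Sym2.map_pair_eq, Sym2.map_pair_eq] at h2
      exact h2 h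
    simp only [shares, Bool.or_eq_true, beq_iff_eq] at hsh
    refine hc _ _ ((SimpleGraph.mem_edgeSet _).mpr hZ1)
      ((SimpleGraph.mem_edgeSet _).mpr hZ2) hnemap ?_
    rcases hsh with ((h | h) | h) | h
    · exact ⟨emb (decode pr.1), Sym2.mem_iff.mpr (Or.inl rfl),
        Sym2.mem_iff.mpr (Or.inl (by rw [h]))⟩
    · exact ⟨emb (decode pr.1), Sym2.mem_iff.mpr (Or.inl rfl),
        Sym2.mem_iff.mpr (Or.inr (by rw [h]))⟩
    · exact ⟨emb (decode pr.2), Sym2.mem_iff.mpr (Or.inr rfl),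
        Sym2.mem_iff.mpr (Or.inl (by rw [h]))⟩
    · exact ⟨emb (decode pr.2), Sym2.mem_iff.mpr (Or.inr rfl),
        Sym2.mem_iff.mpr (Or.inr (by rw [h]))⟩
  have hτ := assn_mem_search cI (internal pr₀) hP
  have hnotat : ∀ (B X : PetersenVert) (hBu : B ≠ u) (hBv : B ≠ v),
      (Z).Adj (.inl (.inl ⟨B, hBu, hBv⟩)) (.inl (.inr X)) →
      ∀ w : Nat, decode w = B →
      c s(.inl (.inl ⟨B, hBu, hBv⟩), .inl (.inr X)) ∉
        colorsAt ((internal pr₀).map fun pr => (pr, cI (s2 pr))) w := by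
    intro B X hBu hBv hadjcon w hdw
    refine not_mem_colorsAt ?_
    intro q hq hw
    rw [List.mem_map] at hq
    obtain ⟨qr, hqr, rfl⟩ := hq
    obtain ⟨hqrE, hq1u, hq1v, hq2u, hq2v⟩ := hint qr hqr
    have hZq : (Z).Adj (emb (decode qr.1)) (emb (decode qr.2)) := by
      rw [hembn _ hq1u hq1v, hembn _ hq2u hq2v]
      exact adjI u v a1 a2 b1 b2 x1 y1 x2 y2 (D2 qr hqrE) ⟨hq1u, hq1v⟩ ⟨hq2u, hq2v⟩
    show c ((s2 qr).map emb) ≠ c s(.inl (.inl ⟨B, hBu, hBv⟩), .inl (.inr X))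
    rw [s2, Sym2.map_pair_eq]
    have hnecon : s(emb (decode qr.1), emb (decode qr.2)) ≠
        s(.inl (.inl ⟨B, hBu, hBv⟩), .inl (.inr X)) := by
      rw [hembn _ hq1u hq1v, hembn _ hq2u hq2v]
      simp [Sym2.eq_iff]
    rcases hw with hw | hw
    · have hd1 : decode qr.1 = B := by
        have hw' : qr.1 = w := hw
        rw [hw', hdw]
      refine hc _ _ ((SimpleGraph.mem_edgeSet _).mpr hZq)
        ((SimpleGraph.mem_edgeSet _).mpr hadjcon) hnecon
        ⟨emb (decode qr.1), Sym2.mem_iff.mpr (Or.inl rfl),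
          Sym2.mem_iff.mpr (Or.inl ?_)⟩
      rw [hd1, hembn _ hBu hBv]
    · have hd2 : decode qr.2 = B := by
        have hw' : qr.2 = w := hw
        rw [hw', hdw]
      refine hc _ _ ((SimpleGraph.mem_edgeSet _).mpr hZq)
        ((SimpleGraph.mem_edgeSet _).mpr hadjcon) hnecon
        ⟨emb (decode qr.2), Sym2.mem_iff.mpr (Or.inr rfl),
          Sym2.mem_iff.mpr (Or.inl ?_)⟩
      rw [hd2, hembn _ hBu hBv]
  rcases horient with ⟨h1, h2⟩ | ⟨h1, h2⟩
  · obtain ⟨w1, hw1, hdw1⟩ := (D6 pr₀ hpr₀E).2 b1 (by rw [h2]; exact hb1)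
      (by rw [h1]; exact hb1u)
    obtain ⟨w2, hw2, hdw2⟩ := (D6 pr₀ hpr₀E).2 b2 (by rw [h2]; exact hb2)
      (by rw [h1]; exact hb2u)
    exact hab ((D8 pr₀ hpr₀E).2 _ hτ w1 hw1 w2 hw2 α β
      (hnotat b1 x1 hb1u hb1v (adjCon1 u v a1 a2 b1 b2 x1 y1 x2 y2 hb1u hb1v) w1 hdw1)
      (hnotat b2 y1 hb2u hb2v (adjCon2 u v a1 a2 b1 b2 x1 y1 x2 y2 hb2u hb2v) w2 hdw2))
  · obtain ⟨w1, hw1, hdw1⟩ := (D6 pr₀ hpr₀E).1 b1 (by rw [h1]; exact hb1)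
      (by rw [h2]; exact hb1u)
    obtain ⟨w2, hw2, hdw2⟩ := (D6 pr₀ hpr₀E).1 b2 (by rw [h1]; exact hb2)
      (by rw [h2]; exact hb2u)
    exact hab ((D8 pr₀ hpr₀E).1 _ hτ w1 hw1 w2 hw2 α β
      (hnotat b1 x1 hb1u hb1v (adjCon1 u v a1 a2 b1 b2 x1 y1 x2 y2 hb1u hb1v) w1 hdw1)
      (hnotat b2 y1 hb2u hb2v (adjCon2 u v a1 a2 b1 b2 x1 y1 x2 y2 hb2u hb2v) w2 hdw2))

end Glue

end PZ1


/-- The junction `Z1 = I ∘ H` of the isochromatic 4-pole `I` with the heterochromatic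
4-pole `H` admits no proper 3-edge-colouring. -/
theorem poleZ1_uncolourable (u v a1 a2 b1 b2 x1 y1 x2 y2 : PetersenVert)
    (huv : petersen.Adj u v)
    (ha1 : petersen.Adj u a1) (ha2 : petersen.Adj u a2)
    (ha12 : a1 ≠ a2) (ha1v : a1 ≠ v) (ha2v : a2 ≠ v)
    (hb1 : petersen.Adj v b1) (hb2 : petersen.Adj v b2)
    (hb12 : b1 ≠ b2) (hb1u : b1 ≠ u) (hb2u : b2 ≠ u)
    (he : petersen.Adj x1 y1) (hf : petersen.Adj x2 y2)
    (h1 : x1 ≠ x2) (h2 : x1 ≠ y2) (h3 : y1 ≠ x2) (h4 : y1 ≠ y2) :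
    ¬ ThreeEdgeColorable (poleZ1 u v a1 a2 b1 b2 x1 y1 x2 y2) := by
  rintro ⟨c, hc⟩
  have hb1v : b1 ≠ v := hb1.ne'
  have hb2v : b2 ≠ v := hb2.ne'
  by_cases hab : c s(.inl (.inl ⟨b1, hb1u, hb1v⟩), .inl (.inr x1)) =
      c s(.inl (.inl ⟨b2, hb2u, hb2v⟩), .inl (.inr y1))
  · exact PZ1.caseH u v a1 a2 b1 b2 x1 y1 x2 y2 c hc hf hb1u hb1v hb2u hb2v hab
  · exact PZ1.caseI u v a1 a2 b1 b2 x1 y1 x2 y2 c hc huv hb1 hb2 hb1u hb2u hb1v hb2v hab
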